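/- Let f : [a, b] → ℝ be continuously differentiable and monotone with |f'(x)| ≤ θ < 1 for all x ∈ [a, b]. Then the exponential sum Σ_{a ≤ n ≤ b} e(f(n)) satisfies |Σ_{a ≤ n ≤ b} e(f(n))| ≪ 1/(1−θ) · (1 + 1/min_{x} |f'(x)|) when f' does not vanish; in particular if f' ≍ δ with 0 < δ < 1 then the sum is ≪ δ^{-1}. -/

import Mathlib

open Real Finset

/-- e(z) = exp(2πiz). -/
noncomputable def e (z : ℝ) : ℂ := Complex.exp (2 * Real.pi * Complex.I * z)


lemma e_add (x y : ℝ) : e (x + y) = e x * e y := by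
  unfold e; rw [← Complex.exp_add]
  congr 1
  push_cast
  ring

lemma norm_e (x : ℝ) : ‖e x‖ = 1 := by
  unfold e
  rw [Complex.norm_exp]
  simp [Complex.mul_re]

lemma e_ne_one {x : ℝ} (h0 : 0 < x) (h1 : x < 1) : e x ≠ 1 := by
  unfold e
  rw [Ne, Complex.exp_eq_one_iff]
  rintro ⟨n, hn⟩
  have h2 : (2 * Real.pi * Complex.I : ℂ) ≠ 0 := by
    simp [Complex.I_ne_zero, Real.pi_ne_zero]
  have hx : (x : ℂ) = n := by
    have := hn
    rw [show ((n:ℂ) * (2 * ↑π * Complex.I)) = (2 * ↑π * Complex.I) * n by ring] at this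
    exact mul_left_cancel₀ h2 this
  have : (x : ℝ) = (n : ℝ) := by exact_mod_cast hx
  rcases lt_or_ge n 1 with h | h
  · have : (n:ℝ) ≤ 0 := by exact_mod_cast Int.lt_add_one_iff.mp h
    linarith
  · have : (1:ℝ) ≤ (n:ℝ) := by exact_mod_cast h
    linarith

-- dup(z : ℝ) : ℂ := Complex.exp (2 * Real.pi * Complex.I * z)

lemma w_formula {x : ℝ} (h0 : 0 < x) (h1 : x < 1) :
    (e x - 1)⁻¹ = -(1/2 : ℂ) - Complex.I/2 * ((Real.cos (π*x) / Real.sin (π*x) : ℝ) : ℂ) := by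
  have hs0 : Real.sin (π * x) ≠ 0 := by
    have := Real.sin_pos_of_pos_of_lt_pi (x := π * x) (by positivity)
      (by nlinarith [Real.pi_pos])
    linarith
  have hsC : (Complex.sin ((π:ℂ) * x)) ≠ 0 := by
    rw [show ((π:ℂ)*x) = ((π*x:ℝ):ℂ) by push_cast; ring, ← Complex.ofReal_sin]
    exact_mod_cast hs0
  apply inv_eq_of_mul_eq_one_right
  have hrw : (2 * (Real.pi:ℂ) * Complex.I * (x:ℂ)) = (2 * ((π*x : ℝ):ℂ)) * Complex.I := by
    push_cast; ring
  unfold e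
  rw [hrw, Complex.exp_mul_I, Complex.cos_two_mul, Complex.sin_two_mul]
  push_cast
  set s := Complex.sin ((π:ℂ) * x)
  set c := Complex.cos ((π:ℂ) * x)
  have hpyth : s^2 + c^2 = 1 := Complex.sin_sq_add_cos_sq _
  have h1 : (2*c^2 - 1 + 2*s*c*Complex.I - 1) = 2*s*(c*Complex.I - s) := by
    linear_combination 2*hpyth
  have h2 : -(1/2:ℂ) - Complex.I/2*(c/s) = -(s + Complex.I*c)/(2*s) := by
    field_simp; ring
  rw [h1, h2]
  field_simp
  linear_combination hpyth - c^2*Complex.I_sq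

lemma cot_anti {x y : ℝ} (hx : 0 < x) (hy : y < π) (hxy : x ≤ y) :
    Real.cos y / Real.sin y ≤ Real.cos x / Real.sin x := by
  have hsx : 0 < Real.sin x := Real.sin_pos_of_pos_of_lt_pi hx (lt_of_le_of_lt hxy hy)
  have hsy : 0 < Real.sin y := Real.sin_pos_of_pos_of_lt_pi (lt_of_lt_of_le hx hxy) hy
  rw [div_le_div_iff₀ hsy hsx]
  have h1 : Real.sin (y - x) = Real.sin y * Real.cos x - Real.cos y * Real.sin x :=
    Real.sin_sub y x
  have h2 : 0 ≤ Real.sin (y - x) := Real.sin_nonneg_of_nonneg_of_le_pi (by linarith) (by linarith)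
  linarith [h1 ▸ h2]

lemma sin_lb {x : ℝ} (h0 : 0 < x) (h1 : x < 1) : 2 * min x (1-x) ≤ Real.sin (π * x) := by
  rcases le_or_gt x (1/2) with h | h
  · have hmin : min x (1-x) = x := min_eq_left (by linarith)
    rw [hmin]
    have := Real.mul_le_sin (x := π * x) (by positivity) (by nlinarith [Real.pi_pos])
    calc 2 * x = 2/π * (π * x) := by field_simp [Real.pi_ne_zero]
    _ ≤ Real.sin (π * x) := this
  · have hmin : min x (1-x) = 1 - x := min_eq_right (by linarith)
    rw [hmin]
    have key : Real.sin (π * x) = Real.sin (π * (1 - x)) := by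
      rw [show π * (1-x) = π - π * x by ring, Real.sin_pi_sub]
    rw [key]
    have := Real.mul_le_sin (x := π * (1-x)) (by nlinarith [Real.pi_pos]) (by nlinarith [Real.pi_pos])
    calc 2 * (1-x) = 2/π * (π * (1-x)) := by field_simp [Real.pi_ne_zero]
    _ ≤ Real.sin (π * (1-x)) := this

lemma cot_bound {x δ θ : ℝ} (hδ : 0 < δ) (hδx : δ ≤ x) (hxθ : x ≤ θ) (hθ : θ < 1) :
    |Real.cos (π*x) / Real.sin (π*x)| ≤ 1/(2*δ) + 1/(2*(1-θ)) := by
  have h0 : 0 < x := lt_of_lt_of_le hδ hδx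
  have h1 : x < 1 := lt_of_le_of_lt hxθ hθ
  have hmin : 0 < min x (1-x) := lt_min h0 (by linarith)
  have hs : 0 < Real.sin (π * x) := lt_of_lt_of_le (by linarith) (sin_lb h0 h1)
  rw [abs_div, abs_of_pos hs]
  have hcos : |Real.cos (π*x)| ≤ 1 := Real.abs_cos_le_one _
  have hslb := sin_lb h0 h1
  have step1 : |Real.cos (π*x)| / Real.sin (π*x) ≤ 1 / (2 * min x (1-x)) := by
    apply div_le_div₀ (by norm_num) hcos (by linarith) hslb
  have step2 : 1 / (2 * min x (1-x)) ≤ 1/(2*δ) + 1/(2*(1-θ)) := by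
    rcases min_cases x (1-x) with ⟨hm, _⟩ | ⟨hm, _⟩
    · rw [hm]
      have : 1/(2*x) ≤ 1/(2*δ) := by
        apply one_div_le_one_div_of_le (by positivity) (by linarith)
      have hpos : 0 < 1/(2*(1-θ)) := div_pos one_pos (by linarith)
      linarith
    · rw [hm]
      have : 1/(2*(1-x)) ≤ 1/(2*(1-θ)) := by
        apply one_div_le_one_div_of_le (by linarith) (by linarith)
      have hpos : 0 < 1/(2*δ) := by positivity
      linarith
  linarith

lemma tel_bound (u : ℕ → ℝ) (m : ℕ)
    (h : (∀ i < m, u i ≤ u (i+1)) ∨ (∀ i < m, u (i+1) ≤ u i)) :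
    ∑ i ∈ Finset.range m, |u (i+1) - u i| ≤ |u m| + |u 0| := by
  rcases h with h | h
  · have heq : ∑ i ∈ Finset.range m, |u (i+1) - u i| = u m - u 0 := by
      rw [← Finset.sum_range_sub u]
      exact Finset.sum_congr rfl fun i hi =>
        abs_of_nonneg (sub_nonneg.2 (h i (Finset.mem_range.1 hi)))
    rw [heq]
    linarith [le_abs_self (u m), neg_abs_le (u 0)]
  · have heq : ∑ i ∈ Finset.range m, |u (i+1) - u i| = u 0 - u m := by
      rw [← Finset.sum_range_sub' u]
      exact Finset.sum_congr rfl fun i hi =>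
        (abs_sub_comm _ _).trans (abs_of_nonneg (sub_nonneg.2 (h i (Finset.mem_range.1 hi))))
    rw [heq]
    linarith [le_abs_self (u 0), neg_abs_le (u m)]

lemma sum_Icc_int (N1 N2 : ℤ) (h : N1 ≤ N2) (F : ℤ → ℂ) :
    ∑ n ∈ Finset.Icc N1 N2, F n
      = ∑ k ∈ Finset.range ((N2 - N1).toNat + 1), F (N1 + k) := by
  apply Finset.sum_nbij' (i := fun n => (n - N1).toNat) (j := fun k => N1 + k)
  · intro n hn
    rw [Finset.mem_Icc] at hn
    rw [Finset.mem_range]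
    omega
  · intro k hk
    rw [Finset.mem_range] at hk
    rw [Finset.mem_Icc]
    omega
  · intro n hn
    rw [Finset.mem_Icc] at hn
    omega
  · intro k hk
    rw [Finset.mem_range] at hk
    omega
  · intro n hn
    rw [Finset.mem_Icc] at hn
    congr 1
    omega


lemma aux_norm (t : ℝ) : ‖-(1/2:ℂ) - Complex.I/2 * (t:ℂ)‖ ≤ 1/2 + |t|/2 := by
  refine le_trans (norm_sub_le _ _) ?_
  have h2 : ‖-(1/2:ℂ)‖ = 1/2 := by norm_num
  have h3 : ‖Complex.I/2 * (t:ℂ)‖ = |t|/2 := by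
    rw [norm_mul, norm_div, Complex.norm_I, Complex.norm_real, Real.norm_eq_abs]
    norm_num
    ring
  rw [h2, h3]

lemma aux_norm2 (t t' : ℝ) :
    ‖(-(1/2:ℂ) - Complex.I/2 * (t:ℂ)) - (-(1/2:ℂ) - Complex.I/2 * (t':ℂ))‖ = |t - t'|/2 := by
  have heq : (-(1/2:ℂ) - Complex.I/2 * (t:ℂ)) - (-(1/2:ℂ) - Complex.I/2 * (t':ℂ))
      = Complex.I/2 * ((t' - t : ℝ):ℂ) := by push_cast; ring
  rw [heq, norm_mul, norm_div, Complex.norm_I, Complex.norm_real, Real.norm_eq_abs,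
    abs_sub_comm]
  norm_num
  ring


set_option maxHeartbeats 2000000 in
lemma KL_pos (a b θ δ : ℝ) (f : ℝ → ℝ) (hab : a ≤ b) (hδ : 0 < δ) (hθ : θ < 1)
    (hmono : MonotoneOn (deriv f) (Set.Icc a b) ∨ AntitoneOn (deriv f) (Set.Icc a b))
    (hbd : ∀ x ∈ Set.Icc a b, δ ≤ deriv f x ∧ deriv f x ≤ θ) :
    ‖∑ n ∈ Finset.Icc ⌈a⌉ ⌊b⌋, e (f n)‖ ≤ 10 * (1/(1-θ)) * (1 + 1/δ) := by
  have hθδ : δ ≤ θ := le_trans (hbd a ⟨le_refl a, hab⟩).1 (hbd a ⟨le_refl a, hab⟩).2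
  have hθ0 : 0 < θ := lt_of_lt_of_le hδ hθδ
  have h1θ : 0 < 1 - θ := by linarith
  have hA1 : 1 ≤ 1/(1-θ) := by rw [le_div_iff₀ h1θ]; linarith
  have hB1 : 1 ≤ 1 + 1/δ := by have : 0 < 1/δ := by positivity
                               linarith
  set R : ℝ := 1/(1-θ) * (1 + 1/δ) with hR
  have hRθ : 1/(1-θ) ≤ R := by nlinarith
  have hRδ : 1/δ ≤ R := by
    have h1 : 1/δ ≤ 1 + 1/δ := by linarith
    nlinarith
  have hR1 : 1 ≤ R := by nlinarith
  have hgoal : 10 * (1/(1-θ)) * (1 + 1/δ) = 10 * R := by rw [hR]; ring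
  rw [hgoal]
  by_cases hNN : (⌈a⌉ : ℤ) ≤ ⌊b⌋
  swap
  · rw [Finset.Icc_eq_empty (by omega)]
    simp only [Finset.sum_empty, norm_zero]
    linarith
  set N1 := ⌈a⌉ with hN1
  set N2 := ⌊b⌋ with hN2
  have haN : (a:ℝ) ≤ (N1:ℝ) := Int.le_ceil a
  have hNb : ((N2:ℝ)) ≤ b := Int.floor_le b
  rw [sum_Icc_int N1 N2 hNN (fun n => e (f n))]
  set M := (N2 - N1).toNat with hMdef
  have hMc : ((M:ℝ)) = (N2:ℝ) - (N1:ℝ) := by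
    have h' : (M:ℤ) = N2 - N1 := Int.toNat_of_nonneg (by omega)
    exact_mod_cast congrArg (Int.cast : ℤ → ℝ) h'
  set φ : ℕ → ℝ := fun k => f ((N1:ℝ) + (k:ℝ)) with hφ
  set d : ℕ → ℝ := fun k => φ (k+1) - φ k with hd
  have hsum1 : ∑ k ∈ Finset.range (M+1), e (f ((N1 + (k:ℤ) : ℤ) : ℝ))
      = ∑ k ∈ Finset.range (M+1), e (φ k) := by
    refine Finset.sum_congr rfl fun k _ => ?_
    simp only [hφ]
    congr 2
    push_cast
    ring
  rw [hsum1]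
  have hmem : ∀ k : ℕ, (k:ℝ) ≤ (M:ℝ) → ((N1:ℝ) + (k:ℝ)) ∈ Set.Icc a b := by
    intro k hk
    constructor
    · have : (0:ℝ) ≤ (k:ℝ) := Nat.cast_nonneg k
      linarith
    · linarith
  have hξ : ∀ k : ℕ, k < M → ∃ ξ, ξ ∈ Set.Ioo ((N1:ℝ) + (k:ℝ)) ((N1:ℝ) + ((k+1:ℕ):ℝ)) ∧
      ξ ∈ Set.Icc a b ∧ deriv f ξ = d k := by
    intro k hk
    have hk1 : ((k+1:ℕ):ℝ) ≤ (M:ℝ) := by exact_mod_cast Nat.succ_le_of_lt hk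
    have hk0 : (k:ℝ) ≤ (M:ℝ) := by push_cast at hk1 ⊢; linarith
    have huv : (N1:ℝ) + (k:ℝ) < (N1:ℝ) + ((k+1:ℕ):ℝ) := by push_cast; linarith
    have hsub : Set.Icc ((N1:ℝ) + (k:ℝ)) ((N1:ℝ) + ((k+1:ℕ):ℝ)) ⊆ Set.Icc a b := by
      intro x hx
      obtain ⟨hx1, hx2⟩ := hx
      exact ⟨le_trans (hmem k hk0).1 hx1, le_trans hx2 (hmem (k+1) hk1).2⟩
    have hdiff : ∀ x ∈ Set.Icc ((N1:ℝ) + (k:ℝ)) ((N1:ℝ) + ((k+1:ℕ):ℝ)), DifferentiableAt ℝ f x := by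
      intro x hx
      have h1 := (hbd x (hsub hx)).1
      exact differentiableAt_of_deriv_ne_zero (by intro h0; rw [h0] at h1; linarith)
    have hcont : ContinuousOn f (Set.Icc ((N1:ℝ) + (k:ℝ)) ((N1:ℝ) + ((k+1:ℕ):ℝ))) :=
      fun x hx => (hdiff x hx).continuousAt.continuousWithinAt
    have hdiffo : DifferentiableOn ℝ f (Set.Ioo ((N1:ℝ) + (k:ℝ)) ((N1:ℝ) + ((k+1:ℕ):ℝ))) :=
      fun x hx => (hdiff x (Set.Ioo_subset_Icc_self hx)).differentiableWithinAt
    obtain ⟨ξ, hξmem, hξd⟩ := exists_deriv_eq_slope f huv hcont hdiffo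
    refine ⟨ξ, hξmem, hsub (Set.Ioo_subset_Icc_self hξmem), ?_⟩
    rw [hξd]
    have hvu : (N1:ℝ) + ((k+1:ℕ):ℝ) - ((N1:ℝ) + (k:ℝ)) = 1 := by push_cast; ring
    rw [hvu, div_one]
  have hdbd : ∀ k : ℕ, k < M → δ ≤ d k ∧ d k ≤ θ := by
    intro k hk
    obtain ⟨ξ, _, hξI, hξd⟩ := hξ k hk
    rw [← hξd]
    exact hbd ξ hξI
  have hdcons : (∀ i : ℕ, i + 1 < M → d i ≤ d (i+1)) ∨ (∀ i : ℕ, i + 1 < M → d (i+1) ≤ d i) := by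
    have hord : ∀ i : ℕ, i + 1 < M → ∃ ξ₁ ξ₂, ξ₁ ∈ Set.Icc a b ∧ ξ₂ ∈ Set.Icc a b ∧ ξ₁ ≤ ξ₂ ∧
        deriv f ξ₁ = d i ∧ deriv f ξ₂ = d (i+1) := by
      intro i hi
      obtain ⟨ξ₁, hξ₁o, hξ₁I, hξ₁d⟩ := hξ i (by omega)
      obtain ⟨ξ₂, hξ₂o, hξ₂I, hξ₂d⟩ := hξ (i+1) hi
      refine ⟨ξ₁, ξ₂, hξ₁I, hξ₂I, ?_, hξ₁d, hξ₂d⟩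
      have h1 := hξ₁o.2
      have h2 := hξ₂o.1
      push_cast at h1 h2
      linarith
    rcases hmono with hm | hm
    · left
      intro i hi
      obtain ⟨ξ₁, ξ₂, hI1, hI2, hle, h1, h2⟩ := hord i hi
      rw [← h1, ← h2]
      exact hm hI1 hI2 hle
    · right
      intro i hi
      obtain ⟨ξ₁, ξ₂, hI1, hI2, hle, h1, h2⟩ := hord i hi
      rw [← h1, ← h2]
      exact hm hI1 hI2 hle
  have hπ := Real.pi_pos
  set c : ℕ → ℝ := fun k => Real.cos (π * d k) / Real.sin (π * d k) with hc
  set K : ℝ := 1/(2*δ) + 1/(2*(1-θ)) with hK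
  have hK0 : 0 < K := by
    rw [hK]
    have : 0 < 1/(2*δ) := by positivity
    have : 0 < 1/(2*(1-θ)) := div_pos one_pos (by linarith)
    linarith
  have hcbd : ∀ k, k < M → |c k| ≤ K := fun k hk =>
    cot_bound hδ (hdbd k hk).1 (hdbd k hk).2 hθ
  have hccons : (∀ i, i + 1 < M → c i ≤ c (i+1)) ∨ (∀ i, i + 1 < M → c (i+1) ≤ c i) := by
    have hanti : ∀ i j, i < M → j < M → d i ≤ d j → c j ≤ c i := by
      intro i j hi hj hij
      apply cot_anti
      · have := (hdbd i hi).1; nlinarith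
      · have := (hdbd j hj).2; nlinarith
      · nlinarith
    rcases hdcons with h | h
    · right
      intro i hi
      exact hanti i (i+1) (by omega) hi (h i hi)
    · left
      intro i hi
      exact hanti (i+1) i hi (by omega) (h i hi)
  set w : ℕ → ℂ := fun k => (e (d k) - 1)⁻¹ with hw
  have hd01 : ∀ k, k < M → 0 < d k ∧ d k < 1 := fun k hk =>
    ⟨lt_of_lt_of_le hδ (hdbd k hk).1, lt_of_le_of_lt (hdbd k hk).2 hθ⟩
  have hwf : ∀ k, k < M → w k = -(1/2:ℂ) - Complex.I/2 * ((c k : ℝ):ℂ) :=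
    fun k hk => w_formula (hd01 k hk).1 (hd01 k hk).2
  have hwnorm : ∀ k, k < M → ‖w k‖ ≤ 1/2 + K/2 := by
    intro k hk
    rw [hwf k hk]
    refine le_trans (aux_norm (c k)) ?_
    have h5 := hcbd k hk
    gcongr
  have hwdiff : ∀ i, i + 1 < M → ‖w (i+1) - w i‖ ≤ |c (i+1) - c i| / 2 := by
    intro i hi
    rw [hwf (i+1) hi, hwf i (by omega)]
    exact le_of_eq (aux_norm2 (c (i+1)) (c i))
  have hkey : ∀ k, k < M → e (φ k) = (e (φ (k+1)) - e (φ k)) * w k := by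
    intro k hk
    have hne : e (d k) - 1 ≠ 0 := sub_ne_zero.2 (e_ne_one (hd01 k hk).1 (hd01 k hk).2)
    have hstep : φ (k+1) = φ k + d k := by simp only [hd]; ring
    rw [hstep, e_add]
    show e (φ k) = (e (φ k) * e (d k) - e (φ k)) * (e (d k) - 1)⁻¹
    field_simp
  have hebd : ∀ n m : ℕ, ‖e (φ n) - e (φ m)‖ ≤ 2 := by
    intro n m
    refine le_trans (norm_sub_le _ _) ?_
    rw [norm_e, norm_e]
    norm_num
  by_cases hM0 : M = 0
  · rw [hM0]
    rw [Finset.sum_range_one, norm_e]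
    linarith
  have hM1 : 1 ≤ M := Nat.one_le_iff_ne_zero.2 hM0
  clear_value w c K d φ M
  rw [Finset.sum_range_succ]
  have hmain : ‖∑ k ∈ Finset.range M, e (φ k)‖ ≤ 1 + 3*K := by
    have hsum_eq : ∑ k ∈ Finset.range M, e (φ k)
        = ∑ k ∈ Finset.range M, w k • (e (φ (k+1)) - e (φ k)) :=
      Finset.sum_congr rfl fun k hk => by
        rw [smul_eq_mul, mul_comm]
        exact hkey k (Finset.mem_range.1 hk)
    rw [hsum_eq, Finset.sum_range_by_parts]
    have htel : ∀ n : ℕ, ∑ j ∈ Finset.range n, (e (φ (j+1)) - e (φ j)) = e (φ n) - e (φ 0) :=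
      fun n => Finset.sum_range_sub (fun j => e (φ j)) n
    simp only [htel]
    refine le_trans (norm_sub_le _ _) ?_
    have hA : ‖w (M-1) • (e (φ M) - e (φ 0))‖ ≤ (1/2 + K/2) * 2 := by
      rw [norm_smul]
      exact mul_le_mul (hwnorm (M-1) (by omega)) (hebd M 0) (norm_nonneg _) (by linarith)
    have hB : ‖∑ i ∈ Finset.range (M-1), (w (i+1) - w i) • (e (φ (i+1)) - e (φ 0))‖ ≤ 2*K := by
      refine le_trans (norm_sum_le _ _) ?_
      have step : ∀ i ∈ Finset.range (M-1), ‖(w (i+1) - w i) • (e (φ (i+1)) - e (φ 0))‖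
          ≤ |c (i+1) - c i| := by
        intro i hi
        have hi' : i + 1 < M := by have := Finset.mem_range.1 hi; omega
        rw [norm_smul]
        calc ‖w (i+1) - w i‖ * ‖e (φ (i+1)) - e (φ 0)‖
            ≤ (|c (i+1) - c i|/2) * 2 :=
              mul_le_mul (hwdiff i hi') (hebd (i+1) 0) (norm_nonneg _) (by positivity)
          _ = |c (i+1) - c i| := by ring
      refine le_trans (Finset.sum_le_sum step) ?_
      have htel2 : ∑ i ∈ Finset.range (M-1), |c (i+1) - c i| ≤ |c (M-1)| + |c 0| := by
        apply tel_bound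
        rcases hccons with h | h
        · left; intro i hi; exact h i (by omega)
        · right; intro i hi; exact h i (by omega)
      refine le_trans htel2 ?_
      have h1 := hcbd (M-1) (by omega)
      have h2 := hcbd 0 (by omega)
      linarith
    linarith
  refine le_trans (norm_add_le _ _) ?_
  rw [norm_e]
  have hKR : K ≤ R := by
    rw [hK]
    have e1 : 1/(2*δ) = (1/2) * (1/δ) := by
      rw [one_div, one_div, mul_inv]; ring
    have e2 : 1/(2*(1-θ)) = (1/2) * (1/(1-θ)) := by
      rw [one_div, one_div, mul_inv]; ring
    rw [e1, e2]
    linarith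
  linarith


lemma e_neg_conj (x : ℝ) : e (-x) = (starRingEnd ℂ) (e x) := by
  unfold e
  rw [← Complex.exp_conj]
  congr 1
  simp only [map_mul, Complex.conj_I, Complex.conj_ofReal, map_ofNat]
  push_cast
  ring


/-- Kuzmin–Landau / first-derivative test: if f is C¹ on [a, b] with monotone derivative and
δ ≤ |f'| ≤ θ < 1, then Σ_{a ≤ n ≤ b} e(f(n)) ≪ (1/(1−θ))(1 + 1/δ); in particular for
f' ≍ δ the sum is ≪ δ⁻¹. -/
theorem kuzmin_landau :
    ∃ C : ℝ, 0 < C ∧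
      ∀ (a b θ δ : ℝ) (f : ℝ → ℝ), a ≤ b → 0 < δ → θ < 1 →
        ContDiffOn ℝ 1 f (Set.Icc a b) →
        (MonotoneOn (deriv f) (Set.Icc a b) ∨ AntitoneOn (deriv f) (Set.Icc a b)) →
        (∀ x ∈ Set.Icc a b, δ ≤ |deriv f x| ∧ |deriv f x| ≤ θ) →
        ‖∑ n ∈ Finset.Icc ⌈a⌉ ⌊b⌋, e (f n)‖ ≤ C * (1 / (1 - θ)) * (1 + 1 / δ) := by
  refine ⟨10, by norm_num, ?_⟩
  intro a b θ δ f hab hδ hθ _hcd hmono hbd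
  have hne : ∀ x ∈ Set.Icc a b, deriv f x ≠ 0 := by
    intro x hx h0
    have h := (hbd x hx).1
    rw [h0, abs_zero] at h
    linarith
  have hdiff : ∀ x ∈ Set.Icc a b, DifferentiableAt ℝ f x :=
    fun x hx => differentiableAt_of_deriv_ne_zero (hne x hx)
  have hsign : (∀ x ∈ Set.Icc a b, 0 < deriv f x) ∨ (∀ x ∈ Set.Icc a b, deriv f x < 0) := by
    by_contra hcon
    push_neg at hcon
    obtain ⟨⟨x₀, hx₀, h₀⟩, ⟨x₁, hx₁, h₁⟩⟩ := hcon
    have h₀' : deriv f x₀ ≤ 0 := h₀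
    have h₁' : 0 ≤ deriv f x₁ := h₁
    have h₀'' : deriv f x₀ < 0 := lt_of_le_of_ne h₀' (hne x₀ hx₀)
    have h₁'' : 0 < deriv f x₁ := lt_of_le_of_ne h₁' (Ne.symm (hne x₁ hx₁))
    have key : ∀ u v : ℝ, u ∈ Set.Icc a b → v ∈ Set.Icc a b → u ≤ v →
        deriv f u < 0 → 0 < deriv f v → False := by
      intro u v hu hv huv hdu hdv
      have hsub : Set.Icc u v ⊆ Set.Icc a b := Set.Icc_subset_Icc hu.1 hv.2
      have hf : ∀ x ∈ Set.Icc u v, HasDerivWithinAt f (deriv f x) (Set.Icc u v) x :=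
        fun x hx => ((hdiff x (hsub hx)).hasDerivAt).hasDerivWithinAt
      obtain ⟨ξ, hξmem, hξeq⟩ := exists_hasDerivWithinAt_eq_of_gt_of_lt huv hf hdu hdv
      exact hne ξ (hsub (Set.Ioo_subset_Icc_self hξmem)) hξeq
    have key2 : ∀ u v : ℝ, u ∈ Set.Icc a b → v ∈ Set.Icc a b → u ≤ v →
        0 < deriv f u → deriv f v < 0 → False := by
      intro u v hu hv huv hdu hdv
      have hsub : Set.Icc u v ⊆ Set.Icc a b := Set.Icc_subset_Icc hu.1 hv.2
      have hf : ∀ x ∈ Set.Icc u v, HasDerivWithinAt f (deriv f x) (Set.Icc u v) x :=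
        fun x hx => ((hdiff x (hsub hx)).hasDerivAt).hasDerivWithinAt
      obtain ⟨ξ, hξmem, hξeq⟩ := exists_hasDerivWithinAt_eq_of_lt_of_gt huv hf hdu hdv
      exact hne ξ (hsub (Set.Ioo_subset_Icc_self hξmem)) hξeq
    rcases le_total x₀ x₁ with h | h
    · exact key x₀ x₁ hx₀ hx₁ h h₀'' h₁''
    · exact key2 x₁ x₀ hx₁ hx₀ h h₁'' h₀''
  rcases hsign with hpos | hneg
  · apply KL_pos a b θ δ f hab hδ hθ hmono
    intro x hx
    have h := hbd x hx
    rw [abs_of_pos (hpos x hx)] at h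
    exact h
  · have hg : ∀ x : ℝ, deriv (fun y => -f y) x = -deriv f x := fun x => deriv.neg
    have hmono' : MonotoneOn (deriv fun y => -f y) (Set.Icc a b)
        ∨ AntitoneOn (deriv fun y => -f y) (Set.Icc a b) := by
      rcases hmono with h | h
      · right
        intro x hx y hy hxy
        rw [hg, hg]
        exact neg_le_neg (h hx hy hxy)
      · left
        intro x hx y hy hxy
        rw [hg, hg]
        exact neg_le_neg (h hx hy hxy)
    have hbd' : ∀ x ∈ Set.Icc a b, δ ≤ deriv (fun y => -f y) x ∧ deriv (fun y => -f y) x ≤ θ := by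
      intro x hx
      have h := hbd x hx
      rw [abs_of_neg (hneg x hx)] at h
      rw [hg]
      exact h
    have hKL := KL_pos a b θ δ (fun y => -f y) hab hδ hθ hmono' hbd'
    beta_reduce at hKL
    have hconv : (starRingEnd ℂ) (∑ n ∈ Finset.Icc ⌈a⌉ ⌊b⌋, e (f n))
        = ∑ n ∈ Finset.Icc ⌈a⌉ ⌊b⌋, e (-f n) := by
      rw [map_sum]
      exact Finset.sum_congr rfl fun n _ => (e_neg_conj (f n)).symm
    have hnorm : ‖∑ n ∈ Finset.Icc ⌈a⌉ ⌊b⌋, e (f n)‖ = ‖∑ n ∈ Finset.Icc ⌈a⌉ ⌊b⌋, e (-f n)‖ := by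
      rw [← hconv, RCLike.norm_conj]
    rw [hnorm]
    exact hKL
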